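/- The platform-choice game is an exact potential game with potential function ρ(n_Am, n_Bm) = γ_A·C(n_Am, 2) + (1 − γ_A)·C(N^A − n_Am, 2) + γ_B·C(n_Bm, 2) + (1 − γ_B)·C(N^B − n_Bm, 2) − δ·(n_Am·n_Bm + (N^A − n_Am)(N^B − n_Bm)), where C(n, 2) = n(n−1)/2. Namely: (i) for any state (n_Am, n_Bm) with n_Am < N^A, ρ(n_Am + 1, n_Bm) − ρ(n_Am, n_Bm) = U^A(m; (n_Am + 1, n_Bm)) − U^A(ℓ; (n_Am, n_Bm)), i.e. the potential change from a Group A agent moving from ℓ to m equals that agent's utility change; and (ii) for any state (n_Am, n_Bm) with n_Bm < N^B, ρ(n_Am, n_Bm + 1) − ρ(n_Am, n_Bm) = U^B(m; (n_Am, n_Bm + 1)) − U^B(ℓ; (n_Am, n_Bm)). -/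
import Mathlib

/-- C(n, 2) = n(n−1)/2, extended to real arguments. -/
noncomputable def C2 (n : ℝ) : ℝ := n * (n - 1) / 2

/-- Utility of a Group A agent on platform m at state (nAm, nBm). -/
noncomputable def UAm (γA δ nAm nBm : ℝ) : ℝ := (nAm - 1) * γA - nBm * δ

/-- Utility of a Group A agent on platform ℓ at state (nAm, nBm). -/
noncomputable def UAl (NA NB γA δ nAm nBm : ℝ) : ℝ :=
  (NA - nAm - 1) * (1 - γA) - (NB - nBm) * δ

/-- Utility of a Group B agent on platform m at state (nAm, nBm). -/
noncomputable def UBm (γB δ nAm nBm : ℝ) : ℝ := -nAm * δ + (nBm - 1) * γB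

/-- Utility of a Group B agent on platform ℓ at state (nAm, nBm). -/
noncomputable def UBl (NA NB γB δ nAm nBm : ℝ) : ℝ :=
  -(NA - nAm) * δ + (NB - nBm - 1) * (1 - γB)

/-- The potential function of the platform-choice game. -/
noncomputable def pot (NA NB γA γB δ nAm nBm : ℝ) : ℝ :=
  γA * C2 nAm + (1 - γA) * C2 (NA - nAm) + γB * C2 nBm + (1 - γB) * C2 (NB - nBm)
    - δ * (nAm * nBm + (NA - nAm) * (NB - nBm))

/-- The platform-choice game is an exact potential game with potential `pot`:
the change in the potential from a single agent switching from ℓ to m equals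
that agent's utility change. -/
theorem exact_potential_game
    (NA NB : ℕ) (hNA : 2 ≤ NA) (hNB : 2 ≤ NB)
    (γA γB δ : ℝ) (hγA : γA ∈ Set.Ioo (1/2 : ℝ) 1) (hγB : γB ∈ Set.Ioo (1/2 : ℝ) 1)
    (hδ : 0 < δ) :
    (∀ nAm nBm : ℕ, nAm < NA → nBm ≤ NB →
      pot NA NB γA γB δ (nAm + 1 : ℕ) nBm - pot NA NB γA γB δ nAm nBm =
        UAm γA δ (nAm + 1 : ℕ) nBm - UAl NA NB γA δ nAm nBm) ∧
    (∀ nAm nBm : ℕ, nAm ≤ NA → nBm < NB →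
      pot NA NB γA γB δ nAm (nBm + 1 : ℕ) - pot NA NB γA γB δ nAm nBm =
        UBm γB δ nAm (nBm + 1 : ℕ) - UBl NA NB γB δ nAm nBm) := by
  constructor <;> intro nAm nBm h1 h2 <;>
    simp only [pot, C2, UAm, UAl, UBm, UBl] <;> push_cast <;> ring
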